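/- arXiv:1210.8395 — 2 statements merged into one kernel-verified Lean document; each statement's English description precedes it below -/
import Mathlib

section
/- For every m ≥ 1 and c ≥ 1, there is a minor embedding of the complete graph K_{cm+1} into the hardware graph F(m,c) in which every branch set φ(u) contains at most 2m vertices of F(m,c); in particular the embedding uses at most 2m(cm+1) vertices of the fabric. -/
open SimpleGraph

/-- A tree decomposition of `G` with tree `T` and bags `B`. -/
def IsTreeDecomp {V I : Type} (G : SimpleGraph V) (T : SimpleGraph I)
    (B : I → Finset V) : Prop :=
  T.IsTree ∧
  (∀ v : V, ∃ i : I, v ∈ B i) ∧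
  (∀ u v : V, G.Adj u v → ∃ i : I, u ∈ B i ∧ v ∈ B i) ∧
  (∀ v : V, (T.induce {i : I | v ∈ B i}).Connected)

/-- The treewidth of `G`: the least `k` such that `G` has a tree decomposition
all of whose bags have at most `k + 1` vertices (i.e. width at most `k`). -/
noncomputable def treewidth {V : Type} (G : SimpleGraph V) : ℕ :=
  sInf {k : ℕ | ∃ (I : Type) (T : SimpleGraph I) (B : I → Finset V),
    IsTreeDecomp G T B ∧ ∀ i : I, (B i).card ≤ k + 1}

/-- `H` is a minor of `G`: branch sets are nonempty (connectedness includes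
nonemptiness), induce connected subgraphs, are pairwise disjoint, and every
edge of `H` is realized by an edge of `G` between the corresponding branch sets. -/
def IsMinor {V W : Type} (H : SimpleGraph V) (G : SimpleGraph W) : Prop :=
  ∃ φ : V → Set W,
    (∀ v : V, (G.induce (φ v)).Connected) ∧
    (∀ u v : V, u ≠ v → Disjoint (φ u) (φ v)) ∧
    (∀ u v : V, H.Adj u v → ∃ a ∈ φ u, ∃ b ∈ φ v, G.Adj a b)

/-- The `n × m` two-dimensional grid graph: vertices `(i, j)` are adjacent iff
they differ by exactly 1 in one coordinate and agree in the other. -/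
def gridGraph (n m : ℕ) : SimpleGraph (Fin n × Fin m) :=
  SimpleGraph.fromRel (fun p q =>
    (p.1 = q.1 ∧ p.2.val + 1 = q.2.val) ∨ (p.2 = q.2 ∧ p.1.val + 1 = q.1.val))

/-- The hardware graph `F(m, c)`: an `m × m` grid of `K_{c,c}` unit cells.
A vertex `(a, b, d)` lies in cell `(a, b)`; it is on the left half if `d < c`
and the right half otherwise.  Left and right halves of a cell are completely
joined; left-half vertices are joined to their images in the cell directly
below; right-half vertices are joined to their images in the cell to the right. -/
def hardwareGraph (m c : ℕ) : SimpleGraph (Fin m × Fin m × Fin (2 * c)) :=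
  SimpleGraph.fromRel (fun x y =>
    (x.1 = y.1 ∧ x.2.1 = y.2.1 ∧ x.2.2.val < c ∧ c ≤ y.2.2.val) ∨
    (x.2.1 = y.2.1 ∧ x.2.2 = y.2.2 ∧ x.2.2.val < c ∧ x.1.val + 1 = y.1.val) ∨
    (x.1 = y.1 ∧ x.2.2 = y.2.2 ∧ c ≤ x.2.2.val ∧ x.2.1.val + 1 = y.2.1.val))


namespace HWAux

def col (m c : ℕ) (j : Fin m) (k : ℕ) (hk : k < c) : Finset (Fin m × Fin m × Fin (2 * c)) :=
  Finset.univ.image (fun a => (a, j, (⟨k, by omega⟩ : Fin (2 * c))))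

def row (m c : ℕ) (j : Fin m) (k : ℕ) (hk : k < c) : Finset (Fin m × Fin m × Fin (2 * c)) :=
  Finset.univ.image (fun b => (j, b, (⟨c + k, by omega⟩ : Fin (2 * c))))

def phi (m c : ℕ) (hm : 0 < m) (hc : 0 < c) (u : Fin (c * m + 1)) :
    Finset (Fin m × Fin m × Fin (2 * c)) :=
  if hu : u.val < c * m then
    if u.val = 0 then col m c ⟨0, hm⟩ 0 hc
    else
      col m c ⟨u.val / c, Nat.div_lt_of_lt_mul hu⟩ (u.val % c) (Nat.mod_lt _ hc) ∪
      row m c ⟨u.val / c, Nat.div_lt_of_lt_mul hu⟩ (u.val % c) (Nat.mod_lt _ hc)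
  else row m c ⟨0, hm⟩ 0 hc

lemma mem_col {m c : ℕ} {j : Fin m} {k : ℕ} {hk : k < c} {x : Fin m × Fin m × Fin (2 * c)} :
    x ∈ col m c j k hk ↔ x.2.1 = j ∧ x.2.2.val = k := by
  obtain ⟨a, b, d⟩ := x
  simp only [col, Finset.mem_image, Finset.mem_univ, true_and, Prod.mk.injEq]
  constructor
  · rintro ⟨a', rfl, rfl, rfl⟩; exact ⟨rfl, rfl⟩
  · rintro ⟨rfl, hd⟩
    exact ⟨a, rfl, rfl, by ext; simp [hd]⟩

lemma mem_row {m c : ℕ} {j : Fin m} {k : ℕ} {hk : k < c} {x : Fin m × Fin m × Fin (2 * c)} :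
    x ∈ row m c j k hk ↔ x.1 = j ∧ x.2.2.val = c + k := by
  obtain ⟨a, b, d⟩ := x
  simp only [row, Finset.mem_image, Finset.mem_univ, true_and, Prod.mk.injEq]
  constructor
  · rintro ⟨b', rfl, rfl, rfl⟩; exact ⟨rfl, rfl⟩
  · rintro ⟨rfl, hd⟩
    exact ⟨b, rfl, rfl, by ext; simp [hd]⟩

lemma col_card {m c : ℕ} (j : Fin m) (k : ℕ) (hk : k < c) : (col m c j k hk).card ≤ m :=
  le_trans Finset.card_image_le (by simp)

lemma row_card {m c : ℕ} (j : Fin m) (k : ℕ) (hk : k < c) : (row m c j k hk).card ≤ m :=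
  le_trans Finset.card_image_le (by simp)

lemma col_row_disj {m c : ℕ} (j j' : Fin m) (k k' : ℕ) (hk : k < c) (hk' : k' < c) :
    Disjoint (col m c j k hk) (row m c j' k' hk') := by
  rw [Finset.disjoint_left]
  intro x hx hx'
  rw [mem_col] at hx; rw [mem_row] at hx'
  omega

lemma col_col_disj {m c : ℕ} {j j' : Fin m} {k k' : ℕ} {hk : k < c} {hk' : k' < c}
    (h : ¬(j = j' ∧ k = k')) : Disjoint (col m c j k hk) (col m c j' k' hk') := by
  rw [Finset.disjoint_left]
  intro x hx hx'
  rw [mem_col] at hx hx'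
  exact h ⟨hx.1 ▸ hx'.1 ▸ rfl, by omega⟩

lemma row_row_disj {m c : ℕ} {j j' : Fin m} {k k' : ℕ} {hk : k < c} {hk' : k' < c}
    (h : ¬(j = j' ∧ k = k')) : Disjoint (row m c j k hk) (row m c j' k' hk') := by
  rw [Finset.disjoint_left]
  intro x hx hx'
  rw [mem_row] at hx hx'
  exact h ⟨hx.1 ▸ hx'.1 ▸ rfl, by omega⟩

lemma hw_adj_lr {m c : ℕ} (a b : Fin m) (d d' : Fin (2 * c)) (h1 : d.val < c)
    (h2 : c ≤ d'.val) : (hardwareGraph m c).Adj (a, b, d) (a, b, d') := by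
  refine ⟨?_, Or.inl (Or.inl ⟨rfl, rfl, h1, h2⟩)⟩
  intro hh
  have := congrArg (fun p : Fin m × Fin m × Fin (2 * c) => p.2.2.val) hh
  simp at this; omega

lemma hw_adj_down {m c : ℕ} (a a' b : Fin m) (d : Fin (2 * c)) (hd : d.val < c)
    (h : a.val + 1 = a'.val) : (hardwareGraph m c).Adj (a, b, d) (a', b, d) := by
  refine ⟨?_, Or.inl (Or.inr (Or.inl ⟨rfl, rfl, hd, h⟩))⟩
  intro hh
  have := congrArg (fun p : Fin m × Fin m × Fin (2 * c) => p.1.val) hh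
  simp at this; omega

lemma hw_adj_right {m c : ℕ} (a b b' : Fin m) (d : Fin (2 * c)) (hd : c ≤ d.val)
    (h : b.val + 1 = b'.val) : (hardwareGraph m c).Adj (a, b, d) (a, b', d) := by
  refine ⟨?_, Or.inl (Or.inr (Or.inr ⟨rfl, rfl, hd, h⟩))⟩
  intro hh
  have := congrArg (fun p : Fin m × Fin m × Fin (2 * c) => p.2.1.val) hh
  simp at this; omega

lemma col_row_adj {m c : ℕ} (j j' : Fin m) (k k' : ℕ) (hk : k < c) (hk' : k' < c) :
    ∃ a ∈ col m c j k hk, ∃ b ∈ row m c j' k' hk', (hardwareGraph m c).Adj a b := by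
  refine ⟨(j', j, ⟨k, by omega⟩), ?_, (j', j, ⟨c + k', by omega⟩), ?_, ?_⟩
  · simp [col]
  · simp [row]
  · exact hw_adj_lr _ _ _ _ (by simp [hk]) (by simp)

lemma induce_connected_of_reach {V : Type} (G : SimpleGraph V) (s : Set V) (hub : V)
    (hhub : hub ∈ s) (h : ∀ v (hv : v ∈ s), (G.induce s).Reachable ⟨v, hv⟩ ⟨hub, hhub⟩) :
    (G.induce s).Connected := by
  rw [connected_iff]
  refine ⟨fun x y => ?_, ⟨⟨hub, hhub⟩⟩⟩
  exact (h x.1 x.2).trans (h y.1 y.2).symm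

lemma chain_reach {V : Type} (G : SimpleGraph V) (s : Set V) {n : ℕ} (f : Fin n → V)
    (hf : ∀ i, f i ∈ s)
    (hadj : ∀ i : ℕ, ∀ h : i + 1 < n, G.Adj (f ⟨i, by omega⟩) (f ⟨i + 1, h⟩)) :
    ∀ i i' : Fin n, (G.induce s).Reachable ⟨f i, hf i⟩ ⟨f i', hf i'⟩ := by
  intro i i'
  have hn : 0 < n := Nat.lt_of_le_of_lt (Nat.zero_le _) i.isLt
  have key : ∀ t : ℕ, ∀ ht : t < n,
      (G.induce s).Reachable ⟨f ⟨0, hn⟩, hf _⟩ ⟨f ⟨t, ht⟩, hf _⟩ := by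
    intro t
    induction t with
    | zero => intro ht; exact Reachable.refl _
    | succ t ih =>
      intro ht
      have h1 : t < n := by omega
      refine (ih h1).trans (Adj.reachable ?_)
      exact hadj t ht
  exact (key i.val i.isLt).symm.trans (key i'.val i'.isLt)

lemma col_subset_reach {m c : ℕ} (j : Fin m) (k : ℕ) (hk : k < c)
    (s : Set (Fin m × Fin m × Fin (2 * c))) (hs : ↑(col m c j k hk) ⊆ s) :
    ∀ (a a' : Fin m),
      ((hardwareGraph m c).induce s).Reachable
        ⟨(a, j, ⟨k, by omega⟩), hs (by simp [col])⟩
        ⟨(a', j, ⟨k, by omega⟩), hs (by simp [col])⟩ := by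
  intro a a'
  exact chain_reach (hardwareGraph m c) s
    (fun a => (a, j, (⟨k, by omega⟩ : Fin (2 * c))))
    (fun a => hs (by simp [col]))
    (fun i h => hw_adj_down _ _ _ _ hk rfl) a a'

lemma row_subset_reach {m c : ℕ} (j : Fin m) (k : ℕ) (hk : k < c)
    (s : Set (Fin m × Fin m × Fin (2 * c))) (hs : ↑(row m c j k hk) ⊆ s) :
    ∀ (b b' : Fin m),
      ((hardwareGraph m c).induce s).Reachable
        ⟨(j, b, ⟨c + k, by omega⟩), hs (by simp [row])⟩
        ⟨(j, b', ⟨c + k, by omega⟩), hs (by simp [row])⟩ := by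
  intro b b'
  exact chain_reach (hardwareGraph m c) s
    (fun b => (j, b, (⟨c + k, by omega⟩ : Fin (2 * c))))
    (fun b => hs (by simp [row]))
    (fun i h => hw_adj_right _ _ _ _ (by simp) rfl) b b'

lemma col_connected {m c : ℕ} (j : Fin m) (k : ℕ) (hk : k < c) :
    ((hardwareGraph m c).induce (↑(col m c j k hk) : Set (Fin m × Fin m × Fin (2 * c)))).Connected := by
  apply induce_connected_of_reach _ _ ((j, j, (⟨k, by omega⟩ : Fin (2 * c)))) (by simp [col])
  intro v hv
  have hv' : v ∈ col m c j k hk := hv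
  simp only [col, Finset.mem_image, Finset.mem_univ, true_and] at hv'
  obtain ⟨a, rfl⟩ := hv'
  exact col_subset_reach j k hk _ (subset_refl _) a j

lemma row_connected {m c : ℕ} (j : Fin m) (k : ℕ) (hk : k < c) :
    ((hardwareGraph m c).induce (↑(row m c j k hk) : Set (Fin m × Fin m × Fin (2 * c)))).Connected := by
  apply induce_connected_of_reach _ _ ((j, j, (⟨c + k, by omega⟩ : Fin (2 * c)))) (by simp [row])
  intro v hv
  have hv' : v ∈ row m c j k hk := hv
  simp only [row, Finset.mem_image, Finset.mem_univ, true_and] at hv'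
  obtain ⟨b, rfl⟩ := hv'
  exact row_subset_reach j k hk _ (subset_refl _) b j

lemma colrow_connected {m c : ℕ} (j : Fin m) (k : ℕ) (hk : k < c) :
    ((hardwareGraph m c).induce
      (↑(col m c j k hk ∪ row m c j k hk) : Set (Fin m × Fin m × Fin (2 * c)))).Connected := by
  have hsub1 : (↑(col m c j k hk) : Set (Fin m × Fin m × Fin (2 * c)))
      ⊆ (↑(col m c j k hk ∪ row m c j k hk) : Set (Fin m × Fin m × Fin (2 * c))) :=
    by intro x hx; exact Finset.mem_coe.mpr (Finset.mem_union_left _ (Finset.mem_coe.mp hx))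
  have hsub2 : (↑(row m c j k hk) : Set (Fin m × Fin m × Fin (2 * c)))
      ⊆ (↑(col m c j k hk ∪ row m c j k hk) : Set (Fin m × Fin m × Fin (2 * c))) :=
    by intro x hx; exact Finset.mem_coe.mpr (Finset.mem_union_right _ (Finset.mem_coe.mp hx))
  apply induce_connected_of_reach _ _ ((j, j, (⟨k, by omega⟩ : Fin (2 * c))))
    (hsub1 (by simp [col]))
  intro v hv
  have hv' : v ∈ col m c j k hk ∪ row m c j k hk := hv
  rw [Finset.mem_union] at hv'
  rcases hv' with h | h
  · simp only [col, Finset.mem_image, Finset.mem_univ, true_and] at h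
    obtain ⟨a, rfl⟩ := h
    exact col_subset_reach j k hk _ hsub1 a j
  · simp only [row, Finset.mem_image, Finset.mem_univ, true_and] at h
    obtain ⟨b, rfl⟩ := h
    refine (row_subset_reach j k hk _ hsub2 b j).trans (Adj.reachable ?_)
    exact (hw_adj_lr j j _ _ hk (by simp)).symm

lemma divmod_inj {c x y : ℕ} (h1 : x / c = y / c) (h2 : x % c = y % c) : x = y := by
  have hx := Nat.div_add_mod x c
  have hy := Nat.div_add_mod y c
  rw [h1, h2] at hx
  rw [← hx, hy]

lemma eq_zero_of_divmod {c x : ℕ} (h1 : x / c = 0) (h2 : x % c = 0) : x = 0 := by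
  have := Nat.div_add_mod x c
  rw [h1, h2] at this
  simpa using this.symm

lemma phi_eq_col (m c : ℕ) (hm : 0 < m) (hc : 0 < c) (u : Fin (c * m + 1))
    (hu : u.val < c * m) (hu0 : u.val = 0) :
    phi m c hm hc u = col m c ⟨0, hm⟩ 0 hc := by
  unfold phi; rw [dif_pos hu, if_pos hu0]

lemma phi_eq_union (m c : ℕ) (hm : 0 < m) (hc : 0 < c) (u : Fin (c * m + 1))
    (hu : u.val < c * m) (hu0 : ¬ u.val = 0) :
    phi m c hm hc u =
      col m c ⟨u.val / c, Nat.div_lt_of_lt_mul hu⟩ (u.val % c) (Nat.mod_lt _ hc) ∪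
      row m c ⟨u.val / c, Nat.div_lt_of_lt_mul hu⟩ (u.val % c) (Nat.mod_lt _ hc) := by
  unfold phi; rw [dif_pos hu, if_neg hu0]

lemma phi_eq_row (m c : ℕ) (hm : 0 < m) (hc : 0 < c) (u : Fin (c * m + 1))
    (hu : ¬ u.val < c * m) : phi m c hm hc u = row m c ⟨0, hm⟩ 0 hc := by
  unfold phi; rw [dif_neg hu]

end HWAux

/-- For every `m ≥ 1` and `c ≥ 1`, there is a minor embedding of `K_{cm+1}`
into `F(m, c)` in which every branch set `φ u` contains at most `2m` vertices;
in particular the embedding uses at most `2m(cm+1)` vertices of the fabric. -/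
theorem isMinor_clique_hardwareGraph_small (m c : ℕ) (hm : 1 ≤ m) (hc : 1 ≤ c) :
    ∃ φ : Fin (c * m + 1) → Finset (Fin m × Fin m × Fin (2 * c)),
      (∀ v, ((hardwareGraph m c).induce (↑(φ v) : Set (Fin m × Fin m × Fin (2 * c)))).Connected) ∧
      (∀ u v, u ≠ v → Disjoint (φ u) (φ v)) ∧
      (∀ u v : Fin (c * m + 1), (⊤ : SimpleGraph (Fin (c * m + 1))).Adj u v →
        ∃ a ∈ φ u, ∃ b ∈ φ v, (hardwareGraph m c).Adj a b) ∧
      (∀ u, (φ u).card ≤ 2 * m) ∧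
      (Finset.univ.biUnion φ).card ≤ 2 * m * (c * m + 1) := by
  have hm0 : 0 < m := hm
  have hc0 : 0 < c := hc
  have hcard : ∀ u : Fin (c * m + 1), (HWAux.phi m c hm0 hc0 u).card ≤ 2 * m := by
    intro u
    by_cases hu : u.val < c * m
    · by_cases hu0 : u.val = 0
      · rw [HWAux.phi_eq_col m c hm0 hc0 u hu hu0]
        exact le_trans (HWAux.col_card _ _ _) (by omega)
      · rw [HWAux.phi_eq_union m c hm0 hc0 u hu hu0]
        refine le_trans (Finset.card_union_le _ _) ?_
        have h1 := HWAux.col_card (m := m) (c := c) ⟨u.val / c, Nat.div_lt_of_lt_mul hu⟩ (u.val % c) (Nat.mod_lt _ hc0)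
        have h2 := HWAux.row_card (m := m) (c := c) ⟨u.val / c, Nat.div_lt_of_lt_mul hu⟩ (u.val % c) (Nat.mod_lt _ hc0)
        omega
    · rw [HWAux.phi_eq_row m c hm0 hc0 u hu]
      exact le_trans (HWAux.row_card _ _ _) (by omega)
  refine ⟨HWAux.phi m c hm0 hc0, ?_, ?_, ?_, hcard, ?_⟩
  · intro v
    by_cases hv : v.val < c * m
    · by_cases hv0 : v.val = 0
      · rw [HWAux.phi_eq_col m c hm0 hc0 v hv hv0]
        exact HWAux.col_connected _ _ _
      · rw [HWAux.phi_eq_union m c hm0 hc0 v hv hv0]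
        exact HWAux.colrow_connected _ _ _
    · rw [HWAux.phi_eq_row m c hm0 hc0 v hv]
      exact HWAux.row_connected _ _ _
  · intro u v huv
    have hne : u.val ≠ v.val := fun h => huv (Fin.ext h)
    by_cases hu : u.val < c * m
    · by_cases hu0 : u.val = 0
      · rw [HWAux.phi_eq_col m c hm0 hc0 u hu hu0]
        by_cases hv : v.val < c * m
        · by_cases hv0 : v.val = 0
          · exact absurd (hu0.trans hv0.symm) hne
          · rw [HWAux.phi_eq_union m c hm0 hc0 v hv hv0]
            refine Finset.disjoint_union_right.mpr
              ⟨HWAux.col_col_disj ?_, HWAux.col_row_disj _ _ _ _ _ _⟩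
            rintro ⟨hj, hk⟩
            have h1 : 0 = v.val / c := congrArg Fin.val hj
            exact hv0 (HWAux.eq_zero_of_divmod h1.symm hk.symm)
        · rw [HWAux.phi_eq_row m c hm0 hc0 v hv]
          exact HWAux.col_row_disj _ _ _ _ _ _
      · rw [HWAux.phi_eq_union m c hm0 hc0 u hu hu0]
        by_cases hv : v.val < c * m
        · by_cases hv0 : v.val = 0
          · rw [HWAux.phi_eq_col m c hm0 hc0 v hv hv0]
            refine Finset.disjoint_union_left.mpr
              ⟨HWAux.col_col_disj ?_, (HWAux.col_row_disj _ _ _ _ _ _).symm⟩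
            rintro ⟨hj, hk⟩
            have h1 : u.val / c = 0 := congrArg Fin.val hj
            exact hu0 (HWAux.eq_zero_of_divmod h1 hk)
          · rw [HWAux.phi_eq_union m c hm0 hc0 v hv hv0]
            refine Finset.disjoint_union_left.mpr
              ⟨Finset.disjoint_union_right.mpr
                ⟨HWAux.col_col_disj ?_, HWAux.col_row_disj _ _ _ _ _ _⟩,
               Finset.disjoint_union_right.mpr
                ⟨(HWAux.col_row_disj _ _ _ _ _ _).symm, HWAux.row_row_disj ?_⟩⟩ <;>
            · rintro ⟨hj, hk⟩
              have h1 : u.val / c = v.val / c := congrArg Fin.val hj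
              exact hne (HWAux.divmod_inj h1 hk)
        · rw [HWAux.phi_eq_row m c hm0 hc0 v hv]
          refine Finset.disjoint_union_left.mpr
            ⟨HWAux.col_row_disj _ _ _ _ _ _, HWAux.row_row_disj ?_⟩
          rintro ⟨hj, hk⟩
          have h1 : u.val / c = 0 := congrArg Fin.val hj
          exact hu0 (HWAux.eq_zero_of_divmod h1 hk)
    · rw [HWAux.phi_eq_row m c hm0 hc0 u hu]
      by_cases hv : v.val < c * m
      · by_cases hv0 : v.val = 0
        · rw [HWAux.phi_eq_col m c hm0 hc0 v hv hv0]
          exact (HWAux.col_row_disj _ _ _ _ _ _).symm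
        · rw [HWAux.phi_eq_union m c hm0 hc0 v hv hv0]
          refine Finset.disjoint_union_right.mpr
            ⟨(HWAux.col_row_disj _ _ _ _ _ _).symm, HWAux.row_row_disj ?_⟩
          rintro ⟨hj, hk⟩
          have h1 : 0 = v.val / c := congrArg Fin.val hj
          exact hv0 (HWAux.eq_zero_of_divmod h1.symm hk.symm)
      · have h9 : u.val = c * m := by have := u.isLt; omega
        have h10 : v.val = c * m := by have := v.isLt; omega
        exact absurd (h9.trans h10.symm) hne
  · intro u v huv
    rw [top_adj] at huv
    have hne : u.val ≠ v.val := fun h => huv (Fin.ext h)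
    by_cases hu : u.val < c * m
    · by_cases hu0 : u.val = 0
      · rw [HWAux.phi_eq_col m c hm0 hc0 u hu hu0]
        by_cases hv : v.val < c * m
        · by_cases hv0 : v.val = 0
          · exact absurd (hu0.trans hv0.symm) hne
          · rw [HWAux.phi_eq_union m c hm0 hc0 v hv hv0]
            obtain ⟨a, ha, b, hb, hab⟩ := HWAux.col_row_adj (m := m) (c := c) ⟨0, hm0⟩
              ⟨v.val / c, Nat.div_lt_of_lt_mul hv⟩ 0 (v.val % c) hc0 (Nat.mod_lt _ hc0)
            exact ⟨a, ha, b, Finset.mem_union_right _ hb, hab⟩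
        · rw [HWAux.phi_eq_row m c hm0 hc0 v hv]
          exact HWAux.col_row_adj _ _ _ _ _ _
      · rw [HWAux.phi_eq_union m c hm0 hc0 u hu hu0]
        by_cases hv : v.val < c * m
        · by_cases hv0 : v.val = 0
          · rw [HWAux.phi_eq_col m c hm0 hc0 v hv hv0]
            obtain ⟨a, ha, b, hb, hab⟩ := HWAux.col_row_adj (m := m) (c := c) ⟨0, hm0⟩
              ⟨u.val / c, Nat.div_lt_of_lt_mul hu⟩ 0 (u.val % c) hc0 (Nat.mod_lt _ hc0)
            exact ⟨b, Finset.mem_union_right _ hb, a, ha, hab.symm⟩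
          · rw [HWAux.phi_eq_union m c hm0 hc0 v hv hv0]
            obtain ⟨a, ha, b, hb, hab⟩ := HWAux.col_row_adj (m := m) (c := c)
              ⟨u.val / c, Nat.div_lt_of_lt_mul hu⟩ ⟨v.val / c, Nat.div_lt_of_lt_mul hv⟩
              (u.val % c) (v.val % c) (Nat.mod_lt _ hc0) (Nat.mod_lt _ hc0)
            exact ⟨a, Finset.mem_union_left _ ha, b, Finset.mem_union_right _ hb, hab⟩
        · rw [HWAux.phi_eq_row m c hm0 hc0 v hv]
          obtain ⟨a, ha, b, hb, hab⟩ := HWAux.col_row_adj (m := m) (c := c)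
            ⟨u.val / c, Nat.div_lt_of_lt_mul hu⟩ ⟨0, hm0⟩ (u.val % c) 0 (Nat.mod_lt _ hc0) hc0
          exact ⟨a, Finset.mem_union_left _ ha, b, hb, hab⟩
    · rw [HWAux.phi_eq_row m c hm0 hc0 u hu]
      by_cases hv : v.val < c * m
      · by_cases hv0 : v.val = 0
        · rw [HWAux.phi_eq_col m c hm0 hc0 v hv hv0]
          obtain ⟨a, ha, b, hb, hab⟩ := HWAux.col_row_adj (m := m) (c := c) ⟨0, hm0⟩ ⟨0, hm0⟩ 0 0 hc0 hc0
          exact ⟨b, hb, a, ha, hab.symm⟩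
        · rw [HWAux.phi_eq_union m c hm0 hc0 v hv hv0]
          obtain ⟨a, ha, b, hb, hab⟩ := HWAux.col_row_adj (m := m) (c := c)
            ⟨v.val / c, Nat.div_lt_of_lt_mul hv⟩ ⟨0, hm0⟩ (v.val % c) 0 (Nat.mod_lt _ hc0) hc0
          exact ⟨b, hb, a, Finset.mem_union_left _ ha, hab.symm⟩
      · have h9 : u.val = c * m := by have := u.isLt; omega
        have h10 : v.val = c * m := by have := v.isLt; omega
        exact absurd (h9.trans h10.symm) hne
  · calc (Finset.univ.biUnion (HWAux.phi m c hm0 hc0)).card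
        ≤ ∑ u, (HWAux.phi m c hm0 hc0 u).card := Finset.card_biUnion_le
    _ ≤ (Finset.univ : Finset (Fin (c * m + 1))).card * (2 * m) :=
        Finset.sum_le_card_nsmul _ _ _ (fun u _ => hcard u)
    _ = 2 * m * (c * m + 1) := by
        simp [Finset.card_univ]
        ring
end

section
/- For every c ≥ 1, the complete graph K_{c+2} is not a minor of the complete bipartite graph K_{c,c}; hence K_{c+1} is the largest complete-graph minor of a single K_{c,c} cell. In particular, K_6 is not a minor of K_{4,4}. -/
open SimpleGraph

private lemma key_lemma (c n : ℕ) (hcn : c + 2 ≤ n) :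
    ¬ IsMinor (⊤ : SimpleGraph (Fin n))
        (completeBipartiteGraph (Fin c) (Fin c)) := by
  classical
  rintro ⟨φ, hconn, hdisj, hadj⟩
  set f : Fin n → Finset (Fin c ⊕ Fin c) := fun v => (Set.toFinite (φ v)).toFinset with hf
  have hmem : ∀ v x, x ∈ f v ↔ x ∈ φ v := fun v x => Set.Finite.mem_toFinset _
  have hne : ∀ v, (f v).Nonempty := by
    intro v
    obtain ⟨⟨a, ha⟩⟩ := (hconn v).nonempty
    exact ⟨a, (hmem v a).2 ha⟩
  have hdisjF : ∀ u v : Fin n, u ≠ v → Disjoint (f u) (f v) := by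
    intro u v huv
    rw [Finset.disjoint_left]
    intro x hxu hxv
    exact (Set.disjoint_left.1 (hdisj u v huv)) ((hmem u x).1 hxu) ((hmem v x).1 hxv)
  have hsum : ∑ v, (f v).card ≤ 2 * c := by
    rw [← Finset.card_biUnion (fun x _ y _ hxy => hdisjF x y hxy)]
    calc (Finset.univ.biUnion f).card ≤ Fintype.card (Fin c ⊕ Fin c) :=
          Finset.card_le_univ _
      _ = 2 * c := by simp [Fintype.card_sum]; ring
  set S : Finset (Fin n) := Finset.univ.filter (fun v => (f v).card = 1) with hS
  set T : Finset (Fin n) := Finset.univ.filter (fun v => ¬ (f v).card = 1) with hT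
  have hST : S.card + T.card = n := by
    rw [hS, hT, Finset.card_filter_add_card_filter_not]; simp
  have hsum_split : ∑ v ∈ S, (f v).card + ∑ v ∈ T, (f v).card = ∑ v, (f v).card := by
    rw [hS, hT]; exact Finset.sum_filter_add_sum_filter_not _ _ _
  have hSsum : S.card ≤ ∑ v ∈ S, (f v).card := by
    calc S.card = ∑ _v ∈ S, 1 := by simp
      _ ≤ ∑ v ∈ S, (f v).card := Finset.sum_le_sum (fun v hv => (hne v).card_pos)
  have hTsum : 2 * T.card ≤ ∑ v ∈ T, (f v).card := by
    calc 2 * T.card = ∑ _v ∈ T, 2 := by simp [mul_comm]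
      _ ≤ ∑ v ∈ T, (f v).card := by
          refine Finset.sum_le_sum (fun v hv => ?_)
          have h1 : 1 ≤ (f v).card := (hne v).card_pos
          have h2 : (f v).card ≠ 1 := by
            simpa [hT] using hv
          omega
  have hScard : 3 ≤ S.card := by omega
  -- choose the unique element of each branch set
  have hchoice : ∀ v : Fin n, ∃ a, a ∈ f v := fun v => (hne v)
  choose g hg using hchoice
  have hcard2 : (Finset.univ : Finset Bool).card < S.card := by
    simp only [Finset.card_univ, Fintype.card_bool]; omega
  obtain ⟨u, hu, v, hv, huv, hguv⟩ :=
    Finset.exists_ne_map_eq_of_card_lt_of_maps_to hcard2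
      (fun v (_ : v ∈ S) => Finset.mem_univ ((g v).isLeft))
  have hcardu : (f u).card = 1 := by simpa [hS] using hu
  have hcardv : (f v).card = 1 := by simpa [hS] using hv
  obtain ⟨au, hau⟩ := Finset.card_eq_one.1 hcardu
  obtain ⟨av, hav⟩ := Finset.card_eq_one.1 hcardv
  have hgu : g u = au := by have := hg u; rw [hau] at this; simpa using this
  have hgv : g v = av := by have := hg v; rw [hav] at this; simpa using this
  obtain ⟨x, hx, y, hy, hxy⟩ := hadj u v (by simpa using huv)
  have hxau : x = au := by
    have : x ∈ f u := (hmem u x).2 hx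
    rw [hau] at this; simpa using this
  have hyav : y = av := by
    have : y ∈ f v := (hmem v y).2 hy
    rw [hav] at this; simpa using this
  rw [hxau, hyav] at hxy
  rw [hgu, hgv] at hguv
  cases au <;> cases av <;> simp_all

/-- For every `c ≥ 1`, `K_{c+2}` is not a minor of `K_{c,c}`; hence `K_{c+1}`
is the largest complete-graph minor of a single `K_{c,c}` cell.  In
particular, `K_6` is not a minor of `K_{4,4}`. -/
theorem not_isMinor_bigClique_completeBipartite :
    (∀ c : ℕ, 1 ≤ c →
      ¬ IsMinor (⊤ : SimpleGraph (Fin (c + 2)))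
          (completeBipartiteGraph (Fin c) (Fin c)) ∧
      (∀ n : ℕ, IsMinor (⊤ : SimpleGraph (Fin n))
          (completeBipartiteGraph (Fin c) (Fin c)) → n ≤ c + 1)) ∧
    ¬ IsMinor (⊤ : SimpleGraph (Fin 6))
        (completeBipartiteGraph (Fin 4) (Fin 4)) := by
  refine ⟨fun c hc => ⟨key_lemma c (c + 2) le_rfl, fun n hn => ?_⟩, key_lemma 4 6 (by norm_num)⟩
  by_contra h
  exact key_lemma c n (by omega) hn
end
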